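/- Convexity of the sum of the k largest eigenvalues (Vidal's bipartite monotones ν̃_k^V are concave). Let n be a finite nonempty type and k : ℕ. For a Hermitian matrix A ∈ Matrix n n ℂ with hA : A.IsHermitian, define E_k(A) as the maximum over all Finsets s ⊆ n with s.card = k of ∑ i ∈ s, hA.eigenvalues i (this equals the sum of the k largest eigenvalues of A). Then for all Hermitian A, B ∈ Matrix n n ℂ and all t ∈ [0,1], the matrix t • A + (1 − t) • B is Hermitian and E_k(t • A + (1 − t) • B) ≤ t * E_k(A) + (1 − t) * E_k(B). -/

import Mathlib

open Matrix

/-- Majorization step: if `0 ≤ d ≤ 1` pointwise and `∑ d = k`, then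
`∑ lam * d` is at most the sum of `lam` over some `k`-element set. -/
lemma exists_card_sum_ge {n : Type*} [Fintype n] [DecidableEq n]
    (lam d : n → ℝ) (k : ℕ) (hd0 : ∀ j, 0 ≤ d j) (hd1 : ∀ j, d j ≤ 1)
    (hsum : ∑ j, d j = k) :
    ∃ s : Finset n, s.card = k ∧ ∑ j, lam j * d j ≤ ∑ j ∈ s, lam j := by
  have hkn : (k : ℝ) ≤ Fintype.card n := by
    rw [← hsum]
    calc ∑ j, d j ≤ ∑ _j : n, (1 : ℝ) := Finset.sum_le_sum fun j _ => hd1 j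
    _ = Fintype.card n := by simp
  have hkn' : k ≤ Fintype.card n := by exact_mod_cast hkn
  obtain ⟨s0, _, hs0card⟩ := Finset.exists_subset_card_eq
    (show k ≤ (Finset.univ : Finset n).card by simpa using hkn')
  have hT : ((Finset.univ : Finset n).powersetCard k).Nonempty :=
    ⟨s0, by simp [Finset.mem_powersetCard, hs0card]⟩
  obtain ⟨s, hsT, hsmax⟩ := Finset.exists_max_image _ (fun s => ∑ j ∈ s, lam j) hT
  have hscard : s.card = k := (Finset.mem_powersetCard.mp hsT).2
  refine ⟨s, hscard, ?_⟩
  have hswap : ∀ j ∈ s, ∀ j', j' ∉ s → lam j' ≤ lam j := by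
    intro j hj j' hj'
    have hmem : insert j' (s.erase j) ∈ (Finset.univ : Finset n).powersetCard k := by
      rw [Finset.mem_powersetCard]
      refine ⟨Finset.subset_univ _, ?_⟩
      rw [Finset.card_insert_of_notMem (fun h => hj' (Finset.mem_of_mem_erase h)),
        Finset.card_erase_of_mem hj, hscard]
      have : 1 ≤ k := by
        rw [← hscard]; exact Finset.card_pos.mpr ⟨j, hj⟩
      omega
    have h1 := hsmax _ hmem
    rw [Finset.sum_insert (fun h => hj' (Finset.mem_of_mem_erase h)),
      Finset.sum_erase_eq_sub hj] at h1
    linarith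
  rcases Nat.eq_zero_or_pos k with hk | hk
  · have hz : ∀ j ∈ Finset.univ, d j = 0 := by
      rw [← Finset.sum_eq_zero_iff_of_nonneg (fun j _ => hd0 j)]
      rw [hsum, hk]; simp
    have h0 : ∑ j, lam j * d j = 0 := Finset.sum_eq_zero fun j _ => by
      rw [hz j (Finset.mem_univ j), mul_zero]
    rw [h0]
    have : s = ∅ := Finset.card_eq_zero.mp (hscard.trans hk)
    simp [this]
  · have hsne : s.Nonempty := Finset.card_pos.mp (by omega)
    obtain ⟨j0, hj0, hj0min⟩ := Finset.exists_min_image s lam hsne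
    set m := lam j0 with hm
    have hds : ∑ j ∈ sᶜ, d j = k - ∑ j ∈ s, d j := by
      have := Finset.sum_add_sum_compl s d
      rw [hsum] at this; linarith
    have h1 : ∑ j ∈ sᶜ, lam j * d j ≤ m * (k - ∑ j ∈ s, d j) := by
      rw [← hds, Finset.mul_sum]
      refine Finset.sum_le_sum fun j hj => ?_
      have hjs : j ∉ s := Finset.mem_compl.mp hj
      exact mul_le_mul_of_nonneg_right (hswap j0 hj0 j hjs) (hd0 j)
    have h2 : ∑ j ∈ s, lam j * d j + m * (k - ∑ j ∈ s, d j) ≤ ∑ j ∈ s, lam j := by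
      have hcard : (k : ℝ) = ∑ _j ∈ s, (1 : ℝ) := by simp [hscard]
      rw [hcard, ← Finset.sum_sub_distrib, Finset.mul_sum, ← Finset.sum_add_distrib]
      refine Finset.sum_le_sum fun j hj => ?_
      have h3 : m ≤ lam j := hj0min j hj
      have h4 : d j ≤ 1 := hd1 j
      have h5 : 0 ≤ d j := hd0 j
      nlinarith
    have := Finset.sum_add_sum_compl s (fun j => lam j * d j)
    linarith

/-- Ky Fan's maximum principle, one direction: for Hermitian `A` and an
orthogonal projection `P` with trace `k`, `Re (tr (P * A))` is at most a sum
of `k` eigenvalues of `A`. -/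
lemma kyFan {n : Type*} [Fintype n] [DecidableEq n]
    (A : Matrix n n ℂ) (hA : A.IsHermitian) (P : Matrix n n ℂ)
    (hP : P.IsHermitian) (hP2 : P * P = P) (k : ℕ) (htr : P.trace = k) :
    ∃ s : Finset n, s.card = k ∧ (P * A).trace.re ≤ ∑ j ∈ s, hA.eigenvalues j := by
  set W : Matrix n n ℂ := (hA.eigenvectorUnitary : Matrix n n ℂ) with hWdef
  have hWW : W * star W = 1 := (Matrix.mem_unitaryGroup_iff).mp hA.eigenvectorUnitary.2
  have hWW' : star W * W = 1 := Matrix.UnitaryGroup.star_mul_self hA.eigenvectorUnitary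
  set Q : Matrix n n ℂ := star W * P * W with hQdef
  have hQH : Q.IsHermitian := by
    unfold Matrix.IsHermitian
    rw [hQdef, conjTranspose_mul, conjTranspose_mul, star_eq_conjTranspose,
      conjTranspose_conjTranspose, hP.eq, mul_assoc]
  have hQ2 : Q * Q = Q := by
    rw [hQdef]
    calc star W * P * W * (star W * P * W)
        = star W * (P * (W * star W) * P) * W := by noncomm_ring
    _ = star W * P * W := by rw [hWW, mul_one, hP2]
  set d : n → ℝ := fun j => (Q j j).re with hd
  have hQjj : ∀ j, Q j j = (d j : ℂ) := fun j => (hQH.coe_re_apply_self j).symm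
  have hQnsq : ∀ j, d j = ∑ l, Complex.normSq (Q j l) := by
    intro j
    have h1 : Q j j = ∑ l, (Complex.normSq (Q j l) : ℂ) := by
      conv_lhs => rw [← hQ2]
      rw [Matrix.mul_apply]
      refine Finset.sum_congr rfl fun l _ => ?_
      have : Q l j = (starRingEnd ℂ) (Q j l) :=
        Eq.symm (by simpa using congrFun (congrFun hQH l) j)
      rw [this, Complex.mul_conj]
    rw [hd]
    simp only [h1]
    simp
  have hd0 : ∀ j, 0 ≤ d j := by
    intro j
    rw [hQnsq j]
    exact Finset.sum_nonneg fun l _ => Complex.normSq_nonneg _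
  have hd1 : ∀ j, d j ≤ 1 := by
    intro j
    have key : Complex.normSq (Q j j) = d j ^ 2 := by
      rw [hQjj j, Complex.normSq_ofReal, sq]
    have h1 : d j ^ 2 ≤ d j := by
      rw [← key]
      calc Complex.normSq (Q j j) ≤ ∑ l, Complex.normSq (Q j l) :=
        Finset.single_le_sum (fun l _ => Complex.normSq_nonneg _) (Finset.mem_univ j)
      _ = d j := (hQnsq j).symm
    nlinarith [hd0 j]
  have hdsum : ∑ j, d j = k := by
    have htrQ : Q.trace = P.trace := by
      rw [hQdef, Matrix.trace_mul_comm, ← mul_assoc, hWW, one_mul]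
    have : Q.trace = (k : ℂ) := by rw [htrQ, htr]
    have h2 : Q.trace = ((∑ j, d j : ℝ) : ℂ) := by
      rw [Matrix.trace]
      push_cast
      exact Finset.sum_congr rfl fun j _ => hQjj j
    rw [h2] at this
    exact_mod_cast this
  -- trace identity
  have htrPA : (P * A).trace.re = ∑ j, hA.eigenvalues j * d j := by
    have hAspec := hA.spectral_theorem
    have h1 : P * A = (P * (W * diagonal (RCLike.ofReal ∘ hA.eigenvalues))) * star W := by
      conv_lhs => rw [hAspec, Unitary.conjStarAlgAut_apply]
      rw [hWdef]; noncomm_ring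
    have h2 : (P * A).trace = (Q * diagonal (RCLike.ofReal ∘ hA.eigenvalues)).trace := by
      rw [h1, Matrix.trace_mul_comm, hQdef]
      congr 1
      noncomm_ring
    rw [h2, Matrix.trace]
    rw [Complex.re_sum]
    refine Finset.sum_congr rfl fun j _ => ?_
    rw [Matrix.diag_apply, Matrix.mul_diagonal, hQjj j]
    simp [mul_comm]
  rw [htrPA]
  exact exists_card_sum_ge hA.eigenvalues d k hd0 hd1 hdsum

/-- The rank-`k` spectral projector attached to a `k`-element index set. -/
noncomputable def specProj {n : Type*} [Fintype n] [DecidableEq n]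
    {C : Matrix n n ℂ} (hC : C.IsHermitian) (s : Finset n) : Matrix n n ℂ :=
  (hC.eigenvectorUnitary : Matrix n n ℂ) *
    diagonal (fun j => if j ∈ s then (1 : ℂ) else 0) *
    star (hC.eigenvectorUnitary : Matrix n n ℂ)

lemma specProj_isHermitian {n : Type*} [Fintype n] [DecidableEq n]
    {C : Matrix n n ℂ} (hC : C.IsHermitian) (s : Finset n) :
    (specProj hC s).IsHermitian := by
  have hstar : (star fun j => if j ∈ s then (1 : ℂ) else 0)
      = fun j => if j ∈ s then (1 : ℂ) else 0 := by
    funext j; by_cases h : j ∈ s <;> simp [h]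
  unfold specProj Matrix.IsHermitian
  rw [conjTranspose_mul, conjTranspose_mul, star_eq_conjTranspose,
    conjTranspose_conjTranspose, diagonal_conjTranspose, hstar, mul_assoc]

lemma specProj_idem {n : Type*} [Fintype n] [DecidableEq n]
    {C : Matrix n n ℂ} (hC : C.IsHermitian) (s : Finset n) :
    specProj hC s * specProj hC s = specProj hC s := by
  unfold specProj
  set W : Matrix n n ℂ := (hC.eigenvectorUnitary : Matrix n n ℂ)
  have hWW' : star W * W = 1 := Matrix.UnitaryGroup.star_mul_self hC.eigenvectorUnitary
  set D : Matrix n n ℂ := diagonal (fun j => if j ∈ s then (1 : ℂ) else 0) with hD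
  have hDD : D * D = D := by
    have h2 : (fun i => (if i ∈ s then (1 : ℂ) else 0) * (if i ∈ s then (1 : ℂ) else 0))
        = fun i => if i ∈ s then (1 : ℂ) else 0 := by
      funext i; by_cases h : i ∈ s <;> simp [h]
    rw [hD, diagonal_mul_diagonal, h2]
  calc W * D * star W * (W * D * star W) = W * (D * (star W * W) * D) * star W := by
        noncomm_ring
  _ = W * D * star W := by rw [hWW', mul_one, hDD]

lemma specProj_trace {n : Type*} [Fintype n] [DecidableEq n]
    {C : Matrix n n ℂ} (hC : C.IsHermitian) (s : Finset n) :
    (specProj hC s).trace = (s.card : ℂ) := by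
  set W : Matrix n n ℂ := (hC.eigenvectorUnitary : Matrix n n ℂ)
  have hWW' : star W * W = 1 := Matrix.UnitaryGroup.star_mul_self hC.eigenvectorUnitary
  have h : (specProj hC s).trace
      = (diagonal (fun j => if j ∈ s then (1 : ℂ) else 0)).trace := by
    unfold specProj
    rw [Matrix.trace_mul_comm, ← mul_assoc, hWW', one_mul]
  rw [h, Matrix.trace_diagonal]
  rw [Finset.sum_ite_mem, Finset.univ_inter]
  simp

lemma specProj_mul_trace {n : Type*} [Fintype n] [DecidableEq n]
    {C : Matrix n n ℂ} (hC : C.IsHermitian) (s : Finset n) :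
    (specProj hC s * C).trace.re = ∑ i ∈ s, hC.eigenvalues i := by
  set W : Matrix n n ℂ := (hC.eigenvectorUnitary : Matrix n n ℂ)
  have hWW' : star W * W = 1 := Matrix.UnitaryGroup.star_mul_self hC.eigenvectorUnitary
  set D : Matrix n n ℂ := diagonal (fun j => if j ∈ s then (1 : ℂ) else 0) with hD
  set L : Matrix n n ℂ := diagonal (RCLike.ofReal ∘ hC.eigenvalues) with hL
  have hdiag : star W * C * W = L := by
    rw [← Unitary.conjStarAlgAut_star_apply (S := ℂ)]; exact hC.conjStarAlgAut_star_eigenvectorUnitary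
  have h2 : (specProj hC s * C).trace = (D * L).trace := by
    unfold specProj
    rw [show W * D * star W * C = W * (D * (star W * C)) by noncomm_ring,
      Matrix.trace_mul_comm,
      show D * (star W * C) * W = D * (star W * C * W) by noncomm_ring, hdiag]
  rw [h2, hD, hL, diagonal_mul_diagonal, Matrix.trace_diagonal]
  have h3 : ∀ j, ((if j ∈ s then (1 : ℂ) else 0) * (RCLike.ofReal ∘ hC.eigenvalues) j).re
      = if j ∈ s then hC.eigenvalues j else 0 := by
    intro j; by_cases h : j ∈ s <;> simp [h]
  rw [Complex.re_sum]
  simp only [h3]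
  rw [Finset.sum_ite_mem, Finset.univ_inter]

/-- The maximum, over all `Finset`s `s` of cardinality `k`, of the sum of the
eigenvalues of a Hermitian matrix indexed by `s`; this equals the sum of the
`k` largest eigenvalues. -/
noncomputable def sumKLargestEigenvalues {n : Type*} [Fintype n] [DecidableEq n]
    (k : ℕ) (A : Matrix n n ℂ) (hA : A.IsHermitian) : ℝ :=
  sSup {x : ℝ | ∃ s : Finset n, s.card = k ∧ x = ∑ i ∈ s, hA.eigenvalues i}

lemma sumKLargest_bddAbove {n : Type*} [Fintype n] [DecidableEq n]
    (k : ℕ) (A : Matrix n n ℂ) (hA : A.IsHermitian) :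
    BddAbove {x : ℝ | ∃ s : Finset n, s.card = k ∧ x = ∑ i ∈ s, hA.eigenvalues i} := by
  apply Set.Finite.bddAbove
  have hsub : {x : ℝ | ∃ s : Finset n, s.card = k ∧ x = ∑ i ∈ s, hA.eigenvalues i}
      ⊆ ↑(((Finset.univ : Finset n).powersetCard k).image
          (fun s => ∑ i ∈ s, hA.eigenvalues i)) := by
    rintro x ⟨s, hs, rfl⟩
    simp only [Finset.coe_image, Set.mem_image, Finset.mem_coe, Finset.mem_powersetCard]
    exact ⟨s, ⟨Finset.subset_univ s, hs⟩, rfl⟩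
  exact Set.Finite.subset (Finset.finite_toSet _) hsub

/-- **Convexity of the sum of the `k` largest eigenvalues** (concavity of
Vidal's bipartite monotones `ν̃ₖ`): for Hermitian `A`, `B` and `t ∈ [0,1]`, the
matrix `t • A + (1 - t) • B` is Hermitian and
`E_k (t • A + (1 - t) • B) ≤ t * E_k A + (1 - t) * E_k B`. -/
theorem sumKLargestEigenvalues_convex {n : Type*} [Fintype n] [DecidableEq n]
    [Nonempty n] (k : ℕ)
    (A B : Matrix n n ℂ) (hA : A.IsHermitian) (hB : B.IsHermitian)
    (t : ℝ) (ht0 : 0 ≤ t) (ht1 : t ≤ 1) :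
    ∃ hC : (t • A + (1 - t) • B).IsHermitian,
      sumKLargestEigenvalues k (t • A + (1 - t) • B) hC ≤
        t * sumKLargestEigenvalues k A hA
          + (1 - t) * sumKLargestEigenvalues k B hB := by
  have hC : (t • A + (1 - t) • B).IsHermitian := by
    unfold Matrix.IsHermitian
    rw [conjTranspose_add, conjTranspose_smul, conjTranspose_smul, star_trivial,
      star_trivial, hA.eq, hB.eq]
  refine ⟨hC, ?_⟩
  by_cases hkn : k ≤ Fintype.card n
  · -- the sets are nonempty
    obtain ⟨s0, _, hs0⟩ := Finset.exists_subset_card_eq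
      (show k ≤ (Finset.univ : Finset n).card by simpa using hkn)
    have hgoal : sSup {x : ℝ | ∃ s : Finset n, s.card = k ∧ x = ∑ i ∈ s, hC.eigenvalues i}
        ≤ t * sumKLargestEigenvalues k A hA + (1 - t) * sumKLargestEigenvalues k B hB := by
      refine csSup_le ⟨∑ i ∈ s0, hC.eigenvalues i, s0, hs0, rfl⟩ ?_
      rintro x ⟨s, hs, rfl⟩
      set P := specProj hC s with hP
      have hx : ∑ i ∈ s, hC.eigenvalues i = (P * (t • A + (1 - t) • B)).trace.re :=
        (specProj_mul_trace hC s).symm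
      have hsplit : (P * (t • A + (1 - t) • B)).trace
          = t • (P * A).trace + (1 - t) • (P * B).trace := by
        rw [mul_add, Matrix.mul_smul, Matrix.mul_smul, Matrix.trace_add,
          Matrix.trace_smul, Matrix.trace_smul]
      have hre : (P * (t • A + (1 - t) • B)).trace.re
          = t * (P * A).trace.re + (1 - t) * (P * B).trace.re := by
        rw [hsplit]
        simp [Complex.real_smul]
      obtain ⟨sA, hsA, hA'⟩ := kyFan A hA P (specProj_isHermitian hC s)
        (specProj_idem hC s) k (by rw [hP, specProj_trace hC s, hs])
      obtain ⟨sB, hsB, hB'⟩ := kyFan B hB P (specProj_isHermitian hC s)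
        (specProj_idem hC s) k (by rw [hP, specProj_trace hC s, hs])
      have hEA : ∑ j ∈ sA, hA.eigenvalues j ≤ sumKLargestEigenvalues k A hA :=
        le_csSup (sumKLargest_bddAbove k A hA) ⟨sA, hsA, rfl⟩
      have hEB : ∑ j ∈ sB, hB.eigenvalues j ≤ sumKLargestEigenvalues k B hB :=
        le_csSup (sumKLargest_bddAbove k B hB) ⟨sB, hsB, rfl⟩
      rw [hx, hre]
      have h1t : (0 : ℝ) ≤ 1 - t := by linarith
      have h1 : t * (P * A).trace.re ≤ t * sumKLargestEigenvalues k A hA :=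
        mul_le_mul_of_nonneg_left (le_trans hA' hEA) ht0
      have h2 : (1 - t) * (P * B).trace.re ≤ (1 - t) * sumKLargestEigenvalues k B hB :=
        mul_le_mul_of_nonneg_left (le_trans hB' hEB) h1t
      linarith
    exact hgoal
  · -- all three sets are empty
    have hemp : ∀ (M : Matrix n n ℂ) (hM : M.IsHermitian),
        {x : ℝ | ∃ s : Finset n, s.card = k ∧ x = ∑ i ∈ s, hM.eigenvalues i} = ∅ := by
      intro M hM
      ext x
      simp only [Set.mem_setOf_eq, Set.mem_empty_iff_false, iff_false, not_exists]
      rintro s ⟨hs, -⟩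
      exact hkn (hs ▸ le_trans (Finset.card_le_univ s) (le_of_eq Finset.card_univ))
    unfold sumKLargestEigenvalues
    rw [hemp _ hC, hemp _ hA, hemp _ hB, Real.sSup_empty]
    simp
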